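/- Let ζ be a primitive m-th root of unity in ℂ where m ≥ 3 is odd, and let the group π = ⟨τ⟩ of order 2 act on the ring ℤ[ζ] by τ·ζ = ζ^{-1}. Then ℤ[ζ] is a free ℤπ-module of rank φ(m)/2. -/

import Mathlib

open Polynomial

namespace ZetaC2Aux


lemma two_step {P : ℕ → Prop} (h0 : P 0) (h1 : P 1)
    (hstep : ∀ n, P n → P (n + 1) → P (n + 2)) : ∀ n, P n := by
  have H : ∀ n, P n ∧ P (n + 1) := by
    intro n
    induction n with
    | zero => exact ⟨h0, h1⟩
    | succ n ih => exact ⟨ih.2, hstep n ih.1 ih.2⟩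
  exact fun n => (H n).1

/-- Vieta–Lucas type polynomials: `V t` evaluated at `x + x⁻¹` gives `x^t + x⁻ᵗ`. -/
noncomputable def V : ℕ → Polynomial ℤ
  | 0 => 2
  | 1 => X
  | (n + 2) => X * V (n + 1) - V n

lemma V_add_two (n : ℕ) : V (n + 2) = X * V (n + 1) - V n := by rw [V]

lemma V_natDegree_le : ∀ n, (V n).natDegree ≤ n := by
  refine two_step ?_ ?_ ?_
  · simp [V]
  · simp [V]
  · intro n h1 h2
    rw [V_add_two]
    refine (natDegree_sub_le _ _).trans (max_le ?_ (h1.trans (by omega)))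
    refine (natDegree_mul_le).trans ?_
    have := natDegree_X_le (R := ℤ)
    omega

lemma V_coeff : ∀ n, (V (n + 1)).coeff (n + 1) = 1 := by
  intro n
  induction n with
  | zero => simp [V]
  | succ n ih =>
    rw [show n + 1 + 1 = n + 2 from rfl, V_add_two, coeff_sub, coeff_X_mul, ih,
      coeff_eq_zero_of_natDegree_lt ((V_natDegree_le n).trans_lt (by omega))]
    ring

lemma V_natDegree (n : ℕ) : (V (n + 1)).natDegree = n + 1 :=
  le_antisymm (V_natDegree_le _) (le_natDegree_of_ne_zero (by rw [V_coeff]; exact one_ne_zero))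

lemma V_monic (n : ℕ) : (V (n + 1)).Monic := by
  unfold Monic leadingCoeff
  rw [V_natDegree, V_coeff]

lemma V_aeval {R : Type*} [CommRing R] (x y : R) (h : x * y = 1) :
    ∀ t, (aeval (x + y)) (V t) = x ^ t + y ^ t := by
  refine two_step ?_ ?_ ?_
  · simp [V, map_ofNat]; ring
  · simp [V]
  · intro n h1 h2
    rw [V_add_two, map_sub, map_mul, aeval_X, h1, h2]
    linear_combination (x ^ n + y ^ n) * h



lemma sum_symm {M : Type*} [AddCommMonoid M] (k : ℕ) (f : ℕ → M) :
    ∑ j ∈ Finset.range (2 * k + 1), f j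
      = f k + ((∑ t ∈ Finset.Icc 1 k, f (k + t)) + ∑ t ∈ Finset.Icc 1 k, f (k - t)) := by
  have h1 : ∑ j ∈ Finset.range k, f j = ∑ t ∈ Finset.Icc 1 k, f (k - t) := by
    refine Finset.sum_nbij' (fun j => k - j) (fun t => k - t) ?_ ?_ ?_ ?_ ?_
    · intro a ha
      simp only [Finset.mem_range] at ha
      simp only [Finset.mem_Icc]
      omega
    · intro b hb
      simp only [Finset.mem_Icc] at hb
      simp only [Finset.mem_range]
      omega
    · intro a ha
      simp only [Finset.mem_range] at ha
      omega
    · intro b hb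
      simp only [Finset.mem_Icc] at hb
      omega
    · intro a ha
      simp only [Finset.mem_range] at ha
      congr 1
      omega
  have h2 : ∑ j ∈ Finset.Ico (k + 1) (2 * k + 1), f j = ∑ t ∈ Finset.Icc 1 k, f (k + t) := by
    refine Finset.sum_nbij' (fun j => j - k) (fun t => k + t) ?_ ?_ ?_ ?_ ?_
    · intro a ha
      simp only [Finset.mem_Ico] at ha
      simp only [Finset.mem_Icc]
      omega
    · intro b hb
      simp only [Finset.mem_Icc] at hb
      simp only [Finset.mem_Ico]
      omega
    · intro a ha
      simp only [Finset.mem_Ico] at ha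
      omega
    · intro b hb
      simp only [Finset.mem_Icc] at hb
      omega
    · intro a ha
      simp only [Finset.mem_Ico] at ha
      congr 1
      omega
  rw [Finset.range_eq_Ico,
    ← Finset.sum_Ico_consecutive f (Nat.zero_le k) (by omega : k ≤ 2 * k + 1),
    Finset.sum_eq_sum_Ico_succ_bot (by omega : k < 2 * k + 1) f,
    ← Finset.range_eq_Ico, h1, h2]
  abel



lemma not_isPrimePow_two_mul {m : ℕ} (hm : Odd m) (h3 : 3 ≤ m) : ¬ IsPrimePow (2 * m) := by
  rintro ⟨p, n, hp, hn, hpn⟩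
  have h2 : (2 : ℕ) ∣ p ^ n := ⟨m, hpn⟩
  have hp2 : p = 2 :=
    ((Nat.prime_dvd_prime_iff_eq Nat.prime_two hp.nat_prime).mp
      (Nat.Prime.dvd_of_dvd_pow Nat.prime_two h2)).symm
  subst hp2
  have hmd : m ∣ 2 ^ n := ⟨2, by omega⟩
  have hm1 : m % 2 = 1 := Nat.odd_iff.mp hm
  have hcop : Nat.Coprime m 2 := by
    have : ¬ (2 ∣ m) := by omega
    exact Nat.coprime_comm.mp ((Nat.prime_two.coprime_iff_not_dvd).mpr this)
  have := Nat.Coprime.eq_one_of_dvd (hcop.pow_right n) hmd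
  omega

lemma cyclo_reverse {m : ℕ} (h3 : 3 ≤ m) : (cyclotomic m ℤ).reverse = cyclotomic m ℤ := by
  have hpos : 0 < m := by omega
  obtain ⟨ζ, hζ⟩ : ∃ ζ : ℂ, IsPrimitiveRoot ζ m :=
    ⟨_, Complex.isPrimitiveRoot_exp m (by omega)⟩
  have hint : IsIntegral ℤ ζ := hζ.isIntegral hpos
  have hmin : cyclotomic m ℤ = minpoly ℤ ζ := cyclotomic_eq_minpoly hζ hpos
  have hne : ζ ≠ 0 := hζ.ne_zero (by omega)
  have hroot : (aeval ζ) ((cyclotomic m ℤ).reverse) = 0 := by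
    letI : Invertible (ζ⁻¹) := ⟨ζ, mul_inv_cancel₀ hne, inv_mul_cancel₀ hne⟩
    have h' : ⅟(ζ⁻¹) = ζ := rfl
    have hiff := eval₂_reflect_eq_zero_iff (algebraMap ℤ ℂ) (ζ⁻¹)
      (cyclotomic m ℤ).natDegree (cyclotomic m ℤ) le_rfl
    rw [h'] at hiff
    rw [aeval_def, reverse, hiff, eval₂_eq_eval_map, algebraMap_int_eq, map_cyclotomic_int]
    exact hζ.inv.isRoot_cyclotomic hpos
  have hrevmonic : ((cyclotomic m ℤ).reverse).Monic := by
    unfold Monic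
    rw [reverse_leadingCoeff]
    unfold trailingCoeff
    rw [natTrailingDegree_eq_zero_of_constantCoeff_ne_zero
      (by rw [constantCoeff_apply, cyclotomic_coeff_zero ℤ (by omega)]; exact one_ne_zero)]
    rw [cyclotomic_coeff_zero ℤ (by omega)]
  have hdvd : cyclotomic m ℤ ∣ (cyclotomic m ℤ).reverse := by
    have := minpoly.isIntegrallyClosed_dvd hint hroot
    rwa [← hmin] at this
  exact eq_of_monic_of_dvd_of_natDegree_le (cyclotomic.monic m ℤ) hrevmonic hdvd
    (reverse_natDegree_le _)

lemma cyclo_palindrome {m k : ℕ} (h3 : 3 ≤ m) (hk : m.totient = 2 * k) {t : ℕ} (ht : t ≤ k) :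
    (cyclotomic m ℤ).coeff (k + t) = (cyclotomic m ℤ).coeff (k - t) := by
  conv_lhs => rw [← cyclo_reverse h3]
  rw [coeff_reverse, natDegree_cyclotomic, hk, revAt_le (by omega)]
  congr 1
  omega

lemma cyclotomic_comp_neg_X {m : ℕ} (hm : Odd m) (h3 : 3 ≤ m) :
    (cyclotomic m ℤ).comp (-X) = cyclotomic (2 * m) ℤ := by
  have hpos : 0 < 2 * m := by omega
  have hm1 : m % 2 = 1 := Nat.odd_iff.mp hm
  obtain ⟨μ, hμ⟩ : ∃ μ : ℂ, IsPrimitiveRoot μ (2 * m) :=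
    ⟨_, Complex.isPrimitiveRoot_exp (2 * m) (by omega)⟩
  have hint : IsIntegral ℤ μ := hμ.isIntegral hpos
  have hmin : cyclotomic (2 * m) ℤ = minpoly ℤ μ := cyclotomic_eq_minpoly hμ hpos
  have hν : IsPrimitiveRoot (μ ^ 2) m := hμ.pow hpos rfl
  have hμm : μ ^ m = -1 := by
    have h1 : (μ ^ m) * (μ ^ m) = 1 := by
      rw [← pow_add]
      have : m + m = 2 * m := by ring
      rw [this]
      exact hμ.pow_eq_one
    rcases mul_self_eq_one_iff.mp h1 with h | h
    · exact absurd h (hμ.pow_ne_one_of_pos_of_lt (by omega) (by omega))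
    · exact h
  have hcop : Nat.Coprime ((m + 1) / 2) m := by
    have hd : ((m + 1) / 2) ∣ (m + 1) := ⟨2, by omega⟩
    have hc1 : Nat.Coprime (m + 1) m := by
      have := (Nat.coprime_add_mul_right_left 1 m 1).mpr (Nat.coprime_one_left m)
      simpa [add_comm] using this
    exact Nat.Coprime.coprime_dvd_left hd hc1
  have hprim : IsPrimitiveRoot (-μ) m := by
    have h := hν.pow_of_coprime ((m + 1) / 2) hcop
    have heq : (μ ^ 2) ^ ((m + 1) / 2) = -μ := by
      rw [← pow_mul]
      have : 2 * ((m + 1) / 2) = m + 1 := by omega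
      rw [this, pow_succ, hμm]
      ring
    rwa [heq] at h
  have hcompmonic : ((cyclotomic m ℤ).comp (-X)).Monic := by
    have heven : Even (m.totient) := Nat.totient_even (by omega)
    unfold Monic
    rw [leadingCoeff_comp (by simp : natDegree (-X : ℤ[X]) ≠ 0)]
    rw [(cyclotomic.monic m ℤ).leadingCoeff, leadingCoeff_neg, leadingCoeff_X,
      natDegree_cyclotomic]
    rw [heven.neg_one_pow]
    ring
  have hdeg : ((cyclotomic m ℤ).comp (-X)).natDegree = (cyclotomic (2 * m) ℤ).natDegree := by
    rw [natDegree_comp, natDegree_cyclotomic, natDegree_cyclotomic]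
    have hcop2 : Nat.Coprime 2 m := by
      have : ¬ (2 ∣ m) := by omega
      exact (Nat.prime_two.coprime_iff_not_dvd).mpr this
    rw [Nat.totient_mul hcop2, Nat.totient_two, one_mul]
    simp
  have hroot : (aeval μ) ((cyclotomic m ℤ).comp (-X)) = 0 := by
    rw [aeval_comp]
    have : (aeval μ) (-X : ℤ[X]) = -μ := by simp
    rw [this, aeval_def, eval₂_eq_eval_map, algebraMap_int_eq, map_cyclotomic_int]
    exact hprim.isRoot_cyclotomic (by omega)
  have hdvd : cyclotomic (2 * m) ℤ ∣ (cyclotomic m ℤ).comp (-X) := by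
    have := minpoly.isIntegrallyClosed_dvd hint hroot
    rwa [← hmin] at this
  exact eq_of_monic_of_dvd_of_natDegree_le (cyclotomic.monic (2 * m) ℤ) hcompmonic hdvd
    hdeg.le

lemma cyclo_eval_neg_one {m : ℕ} (hm : Odd m) (h3 : 3 ≤ m) :
    eval (-1 : ℤ) (cyclotomic m ℤ) = 1 := by
  have h := congrArg (eval (1 : ℤ)) (cyclotomic_comp_neg_X hm h3)
  rw [eval_comp] at h
  simp only [eval_neg, eval_X] at h
  rw [h]
  refine eval_one_cyclotomic_not_prime_pow ?_
  intro p hp kk hkk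
  rcases Nat.eq_zero_or_pos kk with h0 | hkpos
  · subst h0
    simp only [pow_zero] at hkk
    omega
  · exact not_isPrimePow_two_mul hm h3 ⟨p, kk, hp.prime, hkpos, hkk⟩

noncomputable def Psi (m k : ℕ) : Polynomial ℤ :=
  C ((cyclotomic m ℤ).coeff k) +
    ∑ t ∈ Finset.Icc 1 k, C ((cyclotomic m ℤ).coeff (k + t)) * V t

lemma Psi_natDegree_le (m k : ℕ) : (Psi m k).natDegree ≤ k := by
  refine (natDegree_add_le _ _).trans (max_le (by simp) ?_)
  refine natDegree_sum_le_of_forall_le _ _ ?_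
  intro t ht
  refine (natDegree_mul_le).trans ?_
  have h1 : (C ((cyclotomic m ℤ).coeff (k + t))).natDegree = 0 := natDegree_C _
  have h2 := V_natDegree_le t
  have ht' := (Finset.mem_Icc.mp ht).2
  omega

lemma Psi_coeff_k {m k : ℕ} (h3 : 3 ≤ m) (hk : m.totient = 2 * k) (hk0 : 0 < k) :
    (Psi m k).coeff k = 1 := by
  have hlead : (cyclotomic m ℤ).coeff (2 * k) = 1 := by
    have := (cyclotomic.monic m ℤ).coeff_natDegree
    rwa [natDegree_cyclotomic, hk] at this
  rw [Psi, coeff_add, coeff_C, if_neg (by omega), finset_sum_coeff]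
  rw [Finset.sum_eq_single k]
  · rw [coeff_C_mul]
    obtain ⟨k', rfl⟩ : ∃ k', k = k' + 1 := ⟨k - 1, by omega⟩
    rw [V_coeff]
    have : k' + 1 + (k' + 1) = 2 * (k' + 1) := by ring
    rw [this, hlead]
    ring
  · intro t ht htne
    have ht' := (Finset.mem_Icc.mp ht).2
    rw [coeff_C_mul, coeff_eq_zero_of_natDegree_lt ((V_natDegree_le t).trans_lt (by omega)),
      mul_zero]
  · intro h
    exact absurd (Finset.mem_Icc.mpr ⟨hk0, le_rfl⟩) h

lemma Psi_natDegree {m k : ℕ} (h3 : 3 ≤ m) (hk : m.totient = 2 * k) (hk0 : 0 < k) :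
    (Psi m k).natDegree = k :=
  le_antisymm (Psi_natDegree_le m k)
    (le_natDegree_of_ne_zero (by rw [Psi_coeff_k h3 hk hk0]; exact one_ne_zero))

lemma Psi_monic {m k : ℕ} (h3 : 3 ≤ m) (hk : m.totient = 2 * k) (hk0 : 0 < k) :
    (Psi m k).Monic := by
  unfold Monic leadingCoeff
  rw [Psi_natDegree h3 hk hk0, Psi_coeff_k h3 hk hk0]

lemma Psi_aeval {m k : ℕ} (h3 : 3 ≤ m) (hk : m.totient = 2 * k) {R : Type*} [CommRing R]
    (x y : R) (h : x * y = 1) :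
    x ^ k * (aeval (x + y)) (Psi m k) = (aeval x) (cyclotomic m ℤ) := by
  have hxy : ∀ t, t ≤ k → x ^ k * y ^ t = x ^ (k - t) := by
    intro t ht
    have hx : x ^ k = x ^ (k - t) * x ^ t := by
      rw [← pow_add]
      congr 1
      omega
    rw [hx, mul_assoc, ← mul_pow, h, one_pow, mul_one]
  have hrhs : (aeval x) (cyclotomic m ℤ)
      = ∑ j ∈ Finset.range (2 * k + 1), ((cyclotomic m ℤ).coeff j : R) * x ^ j := by
    rw [aeval_eq_sum_range' (n := 2 * k + 1) (by rw [natDegree_cyclotomic, hk]; omega)]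
    refine Finset.sum_congr rfl ?_
    intro j _
    rw [zsmul_eq_mul]
  rw [hrhs, sum_symm k (fun j => ((cyclotomic m ℤ).coeff j : R) * x ^ j)]
  rw [Psi, map_add, aeval_C, map_sum, mul_add, Finset.mul_sum]
  have hterm : ∀ t ∈ Finset.Icc 1 k,
      x ^ k * (aeval (x + y)) (C ((cyclotomic m ℤ).coeff (k + t)) * V t)
        = ((cyclotomic m ℤ).coeff (k + t) : R) * x ^ (k + t)
          + ((cyclotomic m ℤ).coeff (k - t) : R) * x ^ (k - t) := by
    intro t ht
    obtain ⟨ht1, ht2⟩ := Finset.mem_Icc.mp ht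
    rw [map_mul, aeval_C, V_aeval x y h t, algebraMap_int_eq, eq_intCast]
    have hpal := cyclo_palindrome h3 hk ht2
    calc x ^ k * (((cyclotomic m ℤ).coeff (k + t) : R) * (x ^ t + y ^ t))
        = ((cyclotomic m ℤ).coeff (k + t) : R) * (x ^ k * x ^ t)
          + ((cyclotomic m ℤ).coeff (k + t) : R) * (x ^ k * y ^ t) := by ring
      _ = ((cyclotomic m ℤ).coeff (k + t) : R) * x ^ (k + t)
          + ((cyclotomic m ℤ).coeff (k - t) : R) * x ^ (k - t) := by
          rw [hxy t ht2, ← pow_add, hpal]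
  rw [Finset.sum_congr rfl hterm, Finset.sum_add_distrib]
  rw [algebraMap_int_eq, eq_intCast]
  ring

lemma Psi_coeff_zero_sq {m k : ℕ} (hm : Odd m) (h3 : 3 ≤ m) (hk : m.totient = 2 * k) :
    ((Psi m k).coeff 0) ^ 2 = 1 := by
  have hm1 : m % 2 = 1 := Nat.odd_iff.mp hm
  set R := ℤ√(-1)
  set x : R := Zsqrtd.sqrtd with hxdef
  have hx2 : x * x = -1 := by
    rw [Zsqrtd.dmuld]
    push_cast
    ring
  have hxy : x * (-x) = 1 := by rw [mul_neg, hx2]; ring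
  have hyx : (-x) * x = 1 := by rw [neg_mul, hx2]; ring
  have h1 := Psi_aeval h3 hk x (-x) hxy
  have h2 := Psi_aeval h3 hk (-x) x hyx
  rw [show x + -x = 0 by ring] at h1
  rw [show -x + x = 0 by ring] at h2
  have h0 : (aeval (0 : R)) (Psi m k) = algebraMap ℤ R ((Psi m k).coeff 0) := by
    rw [aeval_def, eval₂_at_zero]
  rw [h0] at h1 h2
  have hmul : (algebraMap ℤ R ((Psi m k).coeff 0)) ^ 2
      = (aeval x) (cyclotomic m ℤ) * (aeval (-x)) (cyclotomic m ℤ) := by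
    have e : (algebraMap ℤ R ((Psi m k).coeff 0)) ^ 2
        = x ^ k * algebraMap ℤ R ((Psi m k).coeff 0) *
          ((-x) ^ k * algebraMap ℤ R ((Psi m k).coeff 0)) := by
      rw [show x ^ k * algebraMap ℤ R ((Psi m k).coeff 0) *
          ((-x) ^ k * algebraMap ℤ R ((Psi m k).coeff 0))
          = (x * -x) ^ k * (algebraMap ℤ R ((Psi m k).coeff 0)) ^ 2 by
        rw [mul_pow]; ring]
      rw [hxy, one_pow, one_mul]
    rw [e, h1, h2]
  have hneg : (aeval (-x)) (cyclotomic m ℤ) = (aeval x) (cyclotomic (2 * m) ℤ) := by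
    rw [← cyclotomic_comp_neg_X hm h3, aeval_comp]
    congr 1
    simp
  have hprod : (aeval x) (cyclotomic m ℤ) * (aeval (-x)) (cyclotomic m ℤ) = 1 := by
    rw [hneg, ← map_mul]
    have hexp : cyclotomic (2 * m) ℤ * cyclotomic m ℤ = expand ℤ 2 (cyclotomic m ℤ) := by
      rw [cyclotomic_expand_eq_cyclotomic_mul Nat.prime_two (by omega) ℤ]
      rw [mul_comm m 2]
    rw [mul_comm ((cyclotomic m ℤ) : ℤ[X])]  -- reorder to match
    rw [hexp, expand_aeval]
    have hxsq : x ^ 2 = -1 := by rw [pow_two, hx2]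
    rw [hxsq, show (-1 : R) = algebraMap ℤ R (-1) by simp,
      aeval_algebraMap_apply_eq_algebraMap_eval, cyclo_eval_neg_one hm h3, map_one]
  rw [hprod] at hmul
  have : algebraMap ℤ R (((Psi m k).coeff 0) ^ 2) = algebraMap ℤ R 1 := by
    rw [map_pow, hmul, map_one]
  exact Int.cast_injective this

end ZetaC2Aux

set_option maxHeartbeats 1000000 in
set_option synthInstance.maxHeartbeats 400000 in
open ZetaC2Aux in
/-- Let `ζ` be a primitive `m`-th root of unity in `ℂ`, `m ≥ 3` odd, and let the
group `π = ⟨τ⟩` of order 2 act on `ℤ[ζ]` by `τ·ζ = ζ⁻¹` (i.e. via the automorphism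
`σ` with `σ ζ = ζ⁻¹`).  Then `ℤ[ζ]` is a free `ℤπ`-module of rank `φ(m)/2`:
there is a `ℤ`-basis indexed by `Fin (φ(m)/2) × Bool` which `σ` permutes by
swapping the two elements of each pair. -/
theorem zeta_ring_free_over_group_ring_C2
    (m : ℕ) (hm : Odd m) (h3 : 3 ≤ m) (ζ : ℂ) (hζ : IsPrimitiveRoot ζ m)
    (σ : Algebra.adjoin ℤ ({ζ} : Set ℂ) ≃ₐ[ℤ] Algebra.adjoin ℤ ({ζ} : Set ℂ))
    (hσ : ((σ ⟨ζ, Algebra.self_mem_adjoin_singleton ℤ ζ⟩ :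
        Algebra.adjoin ℤ ({ζ} : Set ℂ)) : ℂ) = ζ⁻¹) :
    ∃ b : Module.Basis (Fin (m.totient / 2) × Bool) ℤ (Algebra.adjoin ℤ ({ζ} : Set ℂ)),
      ∀ i : Fin (m.totient / 2),
        σ (b (i, false)) = b (i, true) ∧ σ (b (i, true)) = b (i, false) := by
  classical
  set k := m.totient / 2 with hkdef
  have heven : Even m.totient := Nat.totient_even (by omega)
  have htpos : 0 < m.totient := Nat.totient_pos.mpr (by omega)
  have hk : m.totient = 2 * k := by
    obtain ⟨c, hc⟩ := heven
    omega
  have hk0 : 0 < k := by omega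
  have hmpos : 0 < m := by omega
  set z : Algebra.adjoin ℤ ({ζ} : Set ℂ) :=
    ⟨ζ, Algebra.self_mem_adjoin_singleton ℤ ζ⟩ with hzdef
  have hzc : (z : ℂ) = ζ := rfl
  set w : Algebra.adjoin ℤ ({ζ} : Set ℂ) := z ^ (m - 1) with hwdef
  have hzm : z ^ m = 1 := by
    apply Subtype.ext
    push_cast
    exact hζ.pow_eq_one
  have hzw : z * w = 1 := by
    have h1 : z * w = z ^ (1 + (m - 1)) := by rw [pow_add, pow_one, hwdef]
    rw [h1, show 1 + (m - 1) = m by omega, hzm]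
  have hwc : (w : ℂ) = ζ⁻¹ := by
    have h1 : ζ * (w : ℂ) = 1 := by
      have h2 := congrArg (Subtype.val) hzw
      push_cast at h2
      exact h2
    exact (inv_eq_of_mul_eq_one_right h1).symm
  have hσz : σ z = w := by
    apply Subtype.ext
    rw [hσ, hwc]
  have hwm : w ^ m = 1 := by
    rw [hwdef, ← pow_mul, mul_comm (m - 1) m, pow_mul, hzm, one_pow]
  have hww : w * w ^ (m - 1) = 1 := by
    calc w * w ^ (m - 1) = w ^ (1 + (m - 1)) := by rw [pow_add, pow_one]
      _ = 1 := by rw [show 1 + (m - 1) = m by omega, hwm]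
  have hσw : σ w = z := by
    have h1 : σ w = w ^ (m - 1) := by rw [hwdef, map_pow, hσz]
    calc σ w = w ^ (m - 1) := h1
      _ = (z * w) * w ^ (m - 1) := by rw [hzw, one_mul]
      _ = z * (w * w ^ (m - 1)) := by ring
      _ = z := by rw [hww, mul_one]
  set η : Algebra.adjoin ℤ ({ζ} : Set ℂ) := z + w with hηdef
  have hση : σ η = η := by rw [hηdef, map_add, hσz, hσw, add_comm]
  set v : Fin k × Bool → Algebra.adjoin ℤ ({ζ} : Set ℂ) :=
    fun p => (bif p.2 then w else z) * η ^ (p.1 : ℕ) with hvdef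
  have hswap1 : ∀ i : Fin k, σ (v (i, false)) = v (i, true) := by
    intro i
    show σ (z * η ^ (i : ℕ)) = w * η ^ (i : ℕ)
    rw [map_mul, hσz, map_pow, hση]
  have hswap2 : ∀ i : Fin k, σ (v (i, true)) = v (i, false) := by
    intro i
    show σ (w * η ^ (i : ℕ)) = z * η ^ (i : ℕ)
    rw [map_mul, hσw, map_pow, hση]
  -- power basis of the adjoined ring over ℤ
  have hint : IsIntegral ℤ ζ := hζ.isIntegral hmpos
  let pb := Algebra.adjoin.powerBasis' hint
  have hdim : pb.dim = 2 * k := by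
    rw [Algebra.adjoin.powerBasis'_dim, ← Polynomial.cyclotomic_eq_minpoly hζ hmpos,
      Polynomial.natDegree_cyclotomic, hk]
  haveI : Module.Finite ℤ (Algebra.adjoin ℤ ({ζ} : Set ℂ)) := Module.Finite.of_basis pb.basis
  -- the key algebraic relation satisfied by η
  have hΦz : (Polynomial.aeval z) (Polynomial.cyclotomic m ℤ) = 0 := by
    have hval : (Polynomial.aeval ζ) (Polynomial.cyclotomic m ℤ) = 0 := by
      rw [Polynomial.aeval_def, Polynomial.eval₂_eq_eval_map, algebraMap_int_eq,
        Polynomial.map_cyclotomic_int]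
      exact hζ.isRoot_cyclotomic hmpos
    apply Subtype.ext
    have hcoe := Polynomial.aeval_algHom_apply
      (Subalgebra.val (Algebra.adjoin ℤ ({ζ} : Set ℂ))) z (Polynomial.cyclotomic m ℤ)
    simp only [Subalgebra.coe_val] at hcoe
    rw [← hcoe]
    rw [hzc]; exact hval
  have hrel : (Polynomial.aeval η) (Psi m k) = 0 := by
    have h := Psi_aeval (m := m) (k := k) h3 hk z w hzw
    have h2 : w ^ k * (z ^ k * (Polynomial.aeval (z + w)) (Psi m k)) = 0 := by
      rw [h, hΦz, mul_zero]
    have h3' : w ^ k * z ^ k = 1 := by rw [← mul_pow, mul_comm w z, hzw, one_pow]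
    calc (Polynomial.aeval η) (Psi m k)
        = (w ^ k * z ^ k) * (Polynomial.aeval (z + w)) (Psi m k) := by
          rw [h3', one_mul, hηdef]
      _ = 0 := by rw [mul_assoc, h2]
  set c : ℕ → ℤ := fun i => (Psi m k).coeff i with hcdef
  have hsum : ∑ i ∈ Finset.range (k + 1), c i • η ^ i = 0 := by
    rw [← hrel, Polynomial.aeval_eq_sum_range' (n := k + 1)
      (by rw [Psi_natDegree h3 hk hk0]; omega) η]
  have hck : c k = 1 := Psi_coeff_k h3 hk hk0
  have hc0 : c 0 = 1 ∨ c 0 = -1 := by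
    have hsq := Psi_coeff_zero_sq hm h3 hk
    have h' : c 0 * c 0 = 1 := by rw [← pow_two]; exact hsq
    exact mul_self_eq_one_iff.mp h'
  set M := Submodule.span ℤ (Set.range v) with hM
  have hgen1 : ∀ i : ℕ, i < k → z * η ^ i ∈ M := by
    intro i hi
    apply Submodule.subset_span
    exact ⟨(⟨i, hi⟩, false), rfl⟩
  have hgen2 : ∀ i : ℕ, i < k → w * η ^ i ∈ M := by
    intro i hi
    apply Submodule.subset_span
    exact ⟨(⟨i, hi⟩, true), rfl⟩
  have hη1k : ∀ i : ℕ, 1 ≤ i → i ≤ k → η ^ i ∈ M := by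
    intro i h1 h2
    have he : η ^ i = z * η ^ (i - 1) + w * η ^ (i - 1) := by
      calc η ^ i = η * η ^ (i - 1) := by
            rw [← pow_succ']
            congr 1
            omega
        _ = z * η ^ (i - 1) + w * η ^ (i - 1) := by rw [hηdef, add_mul]
    rw [he]
    exact M.add_mem (hgen1 _ (by omega)) (hgen2 _ (by omega))
  have h1M : (1 : Algebra.adjoin ℤ ({ζ} : Set ℂ)) ∈ M := by
    have hsplit : ∑ i ∈ Finset.range (k + 1), c i • η ^ i
        = c 0 • (1 : Algebra.adjoin ℤ ({ζ} : Set ℂ))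
          + ∑ i ∈ Finset.Ico 1 (k + 1), c i • η ^ i := by
      rw [Finset.range_eq_Ico, Finset.sum_eq_sum_Ico_succ_bot (by omega)]
      rw [pow_zero]
    rw [hsplit] at hsum
    have hstep : c 0 • (1 : Algebra.adjoin ℤ ({ζ} : Set ℂ))
        = - ∑ i ∈ Finset.Ico 1 (k + 1), c i • η ^ i :=
      eq_neg_of_add_eq_zero_left hsum
    have hsumM : (∑ i ∈ Finset.Ico 1 (k + 1), c i • η ^ i) ∈ M := by
      refine Submodule.sum_mem _ ?_
      intro i hi
      obtain ⟨hi1, hi2⟩ := Finset.mem_Ico.mp hi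
      exact M.smul_mem _ (hη1k i hi1 (by omega))
    have hc0M : c 0 • (1 : Algebra.adjoin ℤ ({ζ} : Set ℂ)) ∈ M := by
      rw [hstep]
      exact M.neg_mem hsumM
    rcases hc0 with h | h
    · rwa [h, one_smul] at hc0M
    · have he : (1 : Algebra.adjoin ℤ ({ζ} : Set ℂ))
          = -(c 0 • (1 : Algebra.adjoin ℤ ({ζ} : Set ℂ))) := by rw [h]; simp
      rw [he]
      exact M.neg_mem hc0M
  have hηM : ∀ i : ℕ, i ≤ k → η ^ i ∈ M := by
    intro i hi
    rcases Nat.eq_zero_or_pos i with rfl | h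
    · simpa using h1M
    · exact hη1k i h hi
  have hred : ∀ t : ℕ, η ^ (k + t) = - ∑ i ∈ Finset.range k, c i • η ^ (i + t) := by
    intro t
    have h0 : η ^ t * ∑ i ∈ Finset.range (k + 1), c i • η ^ i = 0 := by
      rw [hsum, mul_zero]
    have hexp : η ^ t * ∑ i ∈ Finset.range (k + 1), c i • η ^ i
        = (∑ i ∈ Finset.range k, c i • η ^ (i + t)) + η ^ (k + t) := by
      rw [Finset.mul_sum, Finset.sum_range_succ, hck, one_smul]
      congr 1
      · refine Finset.sum_congr rfl ?_
        intro i _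
        rw [mul_smul_comm, ← pow_add, show t + i = i + t by omega]
      · rw [← pow_add, show t + k = k + t by omega]
    rw [hexp] at h0
    exact eq_neg_of_add_eq_zero_right h0
  have hηallM : ∀ i : ℕ, η ^ i ∈ M := by
    intro i
    induction i using Nat.strong_induction_on with
    | _ i ih =>
      rcases le_or_gt i k with h | h
      · exact hηM i h
      · obtain ⟨t, rfl⟩ : ∃ t, i = k + t := ⟨i - k, by omega⟩
        rw [hred t]
        refine M.neg_mem (Submodule.sum_mem _ ?_)
        intro j hj
        have hjk := Finset.mem_range.mp hj
        exact M.smul_mem _ (ih (j + t) (by omega))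
  have hzηM : ∀ i : ℕ, z * η ^ i ∈ M := by
    intro i
    induction i using Nat.strong_induction_on with
    | _ i ih =>
      rcases lt_or_ge i k with h | h
      · exact hgen1 i h
      · obtain ⟨t, rfl⟩ : ∃ t, i = k + t := ⟨i - k, by omega⟩
        have he1 : z * η ^ (k + t)
            = z * (- ∑ i ∈ Finset.range k, c i • η ^ (i + t)) :=
          congrArg (z * ·) (hred t)
        have he2 : z * (- ∑ i ∈ Finset.range k, c i • η ^ (i + t))
            = - ∑ j ∈ Finset.range k, c j • (z * η ^ (j + t)) := by
          rw [mul_neg, Finset.mul_sum]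
          congr 1
          refine Finset.sum_congr rfl ?_
          intro j _
          rw [mul_smul_comm]
        rw [he1, he2]
        refine M.neg_mem (Submodule.sum_mem _ ?_)
        intro j hj
        have hjk := Finset.mem_range.mp hj
        exact M.smul_mem _ (ih (j + t) (by omega))
  set N := Submodule.span ℤ
    (Set.range (fun p : ℕ × Bool => (bif p.2 then z else 1) * η ^ p.1)) with hN
  have hNM : N ≤ M := by
    rw [hN]
    refine Submodule.span_le.mpr ?_
    rintro x ⟨⟨i, b⟩, rfl⟩
    cases b
    · simpa using hηallM i
    · simpa using hzηM i
  have hηN : ∀ x ∈ N, η * x ∈ N := by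
    intro x hx
    induction hx using Submodule.span_induction with
    | mem x hxel =>
      obtain ⟨⟨i, b⟩, rfl⟩ := hxel
      refine Submodule.subset_span ⟨(i + 1, b), ?_⟩
      show (bif b then z else 1) * η ^ (i + 1) = η * ((bif b then z else 1) * η ^ i)
      rw [pow_succ]
      ring
    | zero =>
      rw [mul_zero]
      exact N.zero_mem
    | add x y _ _ hx hy =>
      rw [mul_add]
      exact N.add_mem hx hy
    | smul r x _ hx =>
      rw [mul_smul_comm]
      exact N.smul_mem r hx
  have hzN : ∀ j : ℕ, z ^ j ∈ N := by
    have hz2 : z * z = η * z - 1 := by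
      have hh : η * z = z * z + 1 := by
        rw [hηdef, add_mul, mul_comm w z, hzw]
      rw [hh]
      ring
    refine two_step ?_ ?_ ?_
    · refine Submodule.subset_span ⟨(0, false), ?_⟩
      show (1 : Algebra.adjoin ℤ ({ζ} : Set ℂ)) * η ^ 0 = z ^ 0
      simp
    · refine Submodule.subset_span ⟨(0, true), ?_⟩
      show z * η ^ 0 = z ^ 1
      simp
    · intro j h1 h2
      have he : z ^ (j + 2) = η * z ^ (j + 1) - z ^ j := by
        calc z ^ (j + 2) = (z * z) * z ^ j := by ring
          _ = (η * z - 1) * z ^ j := by rw [hz2]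
          _ = η * z ^ (j + 1) - z ^ j := by ring
      rw [he]
      exact N.sub_mem (hηN _ h2) h1
  have hspan : ⊤ ≤ Submodule.span ℤ (Set.range v) := by
    rw [← hM]
    intro a _
    obtain ⟨p, hp⟩ : ∃ p : Polynomial ℤ, (Polynomial.aeval ζ) p = (a : ℂ) := by
      have heq := Algebra.adjoin_singleton_eq_range_aeval ℤ ζ
      have ha2 : (a : ℂ) ∈ (Polynomial.aeval ζ : Polynomial ℤ →ₐ[ℤ] ℂ).range :=
        (SetLike.ext_iff.mp heq (a : ℂ)).mp a.2
      obtain ⟨p, hp⟩ := ha2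
      exact ⟨p, hp⟩
    have ha : a = (Polynomial.aeval z) p := by
      apply Subtype.ext
      have hcoe := Polynomial.aeval_algHom_apply
        (Subalgebra.val (Algebra.adjoin ℤ ({ζ} : Set ℂ))) z p
      simp only [Subalgebra.coe_val] at hcoe
      rw [← hcoe]
      exact hp.symm
    rw [ha, Polynomial.aeval_eq_sum_range]
    refine Submodule.sum_mem _ ?_
    intro i _
    exact M.smul_mem _ (hNM (hzN i))
  -- linear independence via the Orzech property
  set g := Fintype.linearCombination ℤ v with hg
  have hgsur : Function.Surjective g := by
    rw [← LinearMap.range_eq_top, hg, Fintype.range_linearCombination]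
    exact top_le_iff.mp hspan
  have hcard : Fintype.card (Fin k × Bool) = pb.dim := by
    simp only [Fintype.card_prod, Fintype.card_fin, Fintype.card_bool, hdim]
    omega
  let e : (Fin k × Bool) ≃ Fin pb.dim := Fintype.equivFinOfCardEq hcard
  let ilin : ((Fin k × Bool) → ℤ) →ₗ[ℤ] Algebra.adjoin ℤ ({ζ} : Set ℂ) :=
    (pb.basis.equivFun.symm.toLinearMap).comp
      ((LinearEquiv.funCongrLeft ℤ ℤ e.symm).toLinearMap)
  have hiinj : Function.Injective ilin := by
    have hco : ⇑ilin = ⇑pb.basis.equivFun.symm ∘ ⇑(LinearEquiv.funCongrLeft ℤ ℤ e.symm) := rfl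
    rw [hco]
    exact Function.Injective.comp (pb.basis.equivFun.symm.injective)
      ((LinearEquiv.funCongrLeft ℤ ℤ e.symm).injective)
  have hginj : Function.Injective g :=
    OrzechProperty.injective_of_surjective_of_injective ilin g hiinj hgsur
  have hli : LinearIndependent ℤ v := by
    refine Fintype.linearIndependent_iff.mpr ?_
    intro gc hgc
    have hz0 : g gc = g 0 := by
      rw [map_zero, hg, Fintype.linearCombination_apply]
      exact hgc
    have h0 := hginj hz0
    intro i
    rw [h0]
    rfl
  refine ⟨Module.Basis.mk hli hspan, fun i => ⟨?_, ?_⟩⟩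
  · rw [Module.Basis.mk_apply, Module.Basis.mk_apply]
    exact hswap1 i
  · rw [Module.Basis.mk_apply, Module.Basis.mk_apply]
    exact hswap2 i
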